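/- If a simple graph G on n vertices contains no copy of the complete bipartite graph K_{s,t} (with s, t >= 2), then the sum over all vertices v of C(deg(v), t) is at most (s-1) * C(n, t). -/

import Mathlib

open Finset

theorem choose_degree_sum_of_kst_free {V : Type*} [Fintype V] [DecidableEq V]
    (G : SimpleGraph V) [DecidableRel G.Adj] (s t : ℕ) (hs : 2 ≤ s) (ht : 2 ≤ t)
    (hfree : ¬ ∃ A B : Finset V, A.card = s ∧ B.card = t ∧ Disjoint A B ∧
      ∀ a ∈ A, ∀ b ∈ B, G.Adj a b) :
    ∑ v, (G.degree v).choose t ≤ (s - 1) * (Fintype.card V).choose t := by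
  classical
  have key : ∀ T : Finset V, T.card = t →
      ((univ : Finset V).filter (fun v => T ⊆ G.neighborFinset v)).card ≤ s - 1 := by
    intro T hT
    by_contra h
    push_neg at h
    have hs' : s ≤ ((univ : Finset V).filter (fun v => T ⊆ G.neighborFinset v)).card := by
      omega
    obtain ⟨A, hA, hAcard⟩ := Finset.exists_subset_card_eq hs'
    apply hfree
    refine ⟨A, T, hAcard, hT, ?_, ?_⟩
    · rw [Finset.disjoint_left]
      intro a haA haT
      have := hA haA
      rw [mem_filter] at this
      have : a ∈ G.neighborFinset a := this.2 haT
      rw [SimpleGraph.mem_neighborFinset] at this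
      exact G.irrefl this
    · intro a haA b hbT
      have := hA haA
      rw [mem_filter] at this
      have := this.2 hbT
      rwa [SimpleGraph.mem_neighborFinset] at this
  calc ∑ v, (G.degree v).choose t
      = ∑ v, ((univ.powersetCard t).filter (fun T => T ⊆ G.neighborFinset v)).card := by
        refine Finset.sum_congr rfl fun v _ => ?_
        rw [← G.card_neighborFinset_eq_degree, ← Finset.card_powersetCard]
        congr 1
        ext T
        simp only [mem_powersetCard, mem_filter, subset_univ, true_and]
        tauto
    _ = ∑ T ∈ univ.powersetCard t,
          ((univ : Finset V).filter (fun v => T ⊆ G.neighborFinset v)).card := by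
        simp only [Finset.card_filter]
        rw [Finset.sum_comm]
    _ ≤ ∑ T ∈ univ.powersetCard t, (s - 1) := by
        refine Finset.sum_le_sum fun T hT => key T ?_
        exact (mem_powersetCard.mp hT).2
    _ = (s - 1) * (Fintype.card V).choose t := by
        rw [Finset.sum_const, Finset.card_powersetCard, card_univ, smul_eq_mul, mul_comm]
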